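/- Let Φ_L be the complete binary voting tree with n leaves labeled 1,...,n (n a power of two, n ≥ 4), evaluated on a perfect manipulator tournament T with parts {α}, B, C. If the winner of Φ_L lies in C, then one of the two subtrees of Φ_L's root has all its leaf labels in C, and the other subtree contains the leaf labeled α. -/
import Mathlib


/-- A voting tree: a binary tree whose leaves are labeled by candidates. -/
inductive VTree (α : Type) : Type
  | leaf : α → VTree α
  | node : VTree α → VTree α → VTree α

namespace VTree

variable {α β : Type}

/-- Evaluate a voting tree on the `beats` relation `T`: at each internal node the
child's label that beats the other propagates (a label beats itself since `T` is
irreflexive for tournaments). -/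
def eval (T : α → α → Bool) : VTree α → α
  | leaf a => a
  | node l r => if T (eval T l) (eval T r) then eval T l else eval T r

/-- The list of leaf labels, left to right. -/
def leaves : VTree α → List α
  | leaf a => [a]
  | node l r => leaves l ++ leaves r

/-- Relabel the leaves of a voting tree. -/
def map (f : α → β) : VTree α → VTree β
  | leaf a => leaf (f a)
  | node l r => node (map f l) (map f r)

/-- Substitute a voting tree for each leaf. -/
def bind : VTree α → (α → VTree β) → VTree β
  | leaf a, f => f a
  | node l r, f => node (bind l f) (bind r f)

/-- The complete binary tree of depth `d` whose leaves, left to right, are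
`f 0, f 1, …, f (2^d - 1)`. -/
def completeTree (f : ℕ → α) : ℕ → VTree α
  | 0 => leaf (f 0)
  | d + 1 => node (completeTree f d) (completeTree (fun i => f (i + 2 ^ d)) d)

/-- Pair up adjacent trees in a list by a match. -/
def pairUp : List (VTree α) → List (VTree α)
  | a :: b :: rest => node a b :: pairUp rest
  | l => l

theorem pairUp_length : ∀ l : List (VTree α), (pairUp l).length = (l.length + 1) / 2
  | [] => by simp [pairUp]
  | [_] => by simp [pairUp]
  | a :: b :: rest => by
      simp only [pairUp, List.length_cons, pairUp_length rest]
      omega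

/-- Play off a list of trees in a balanced binary fashion (round-robin of rounds). -/
def roundRobin (d : VTree α) : List (VTree α) → VTree α
  | [] => d
  | [t] => t
  | t₁ :: t₂ :: rest => roundRobin d (pairUp (t₁ :: t₂ :: rest))
  termination_by l => l.length
  decreasing_by simp only [pairUp_length, List.length_cons]; omega

/-- The voting tree `Λ_{i:S}`: one leaf-pair `(i, s)` for each `s` in the list `S`,
with the match winners played off in a balanced binary tree. -/
def lambdaTree (i : α) (S : List α) : VTree α :=
  roundRobin (leaf i) (S.map fun s => node (leaf i) (leaf s))

end VTree

/-- A tournament: an irreflexive relation such that for distinct `a`, `b`,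
exactly one of `a` beats `b` or `b` beats `a` holds. -/
def IsTournament {α : Type} (T : α → α → Bool) : Prop :=
  (∀ a, T a a = false) ∧ ∀ a b : α, a ≠ b → T a b = !T b a

/-- The out-degree of a vertex in a tournament on `Fin n`. -/
def outDeg {n : ℕ} (T : Fin n → Fin n → Bool) (v : Fin n) : ℕ :=
  (Finset.univ.filter fun w => T v w).card

/-- A perfect manipulator tournament on `Fin n` with manipulator `a` and parts
`{a}`, `B`, `C`: `B`, `C` are nonempty, the three parts partition the vertices,
`a` beats all of `B`, every member of `B` beats every member of `C`, and every
member of `C` beats `a`. -/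
def IsPerfectManipulator {n : ℕ} (T : Fin n → Fin n → Bool) (a : Fin n)
    (B C : Finset (Fin n)) : Prop :=
  IsTournament T ∧ B.Nonempty ∧ C.Nonempty ∧ a ∉ B ∧ a ∉ C ∧ Disjoint B C ∧
    insert a (B ∪ C) = Finset.univ ∧
    (∀ b ∈ B, T a b) ∧ (∀ b ∈ B, ∀ c ∈ C, T b c) ∧ (∀ c ∈ C, T c a)

theorem my_eval_mem_leaves {α : Type} (T : α → α → Bool) :
    ∀ t : VTree α, t.eval T ∈ t.leaves
  | .leaf a => by simp [VTree.eval, VTree.leaves]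
  | .node l r => by
      simp only [VTree.eval, VTree.leaves, List.mem_append]
      split
      · exact Or.inl (my_eval_mem_leaves T l)
      · exact Or.inr (my_eval_mem_leaves T r)

theorem my_winner_in_B {n : ℕ} (T : Fin n → Fin n → Bool) (a : Fin n)
    (B C : Finset (Fin n)) (htour : IsTournament T) (hd : Disjoint B C)
    (hbc : ∀ b ∈ B, ∀ c ∈ C, T b c)
    (hcl : ∀ v : Fin n, v = a ∨ v ∈ B ∨ v ∈ C) :
    ∀ t : VTree (Fin n), (∃ b ∈ t.leaves, b ∈ B) → a ∉ t.leaves → t.eval T ∈ B := by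
  intro t
  induction t with
  | leaf x =>
      intro hb ha
      simp only [VTree.leaves, List.mem_singleton] at hb ha
      obtain ⟨b, rfl, hbB⟩ := hb
      exact hbB
  | node l r ihl ihr =>
      intro hb ha
      simp only [VTree.leaves, List.mem_append] at hb ha
      push_neg at ha
      have hal : a ∉ l.leaves := ha.1
      have har : a ∉ r.leaves := ha.2
      simp only [VTree.eval]
      obtain ⟨b, hbmem, hbB⟩ := hb
      rcases hbmem with hmem | hmem
      · -- B-leaf in left: eval l ∈ B
        have hlB : l.eval T ∈ B := ihl ⟨b, hmem, hbB⟩ hal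
        rcases hcl (r.eval T) with h | h | h
        · exact absurd (h ▸ my_eval_mem_leaves T r) har
        · split <;> assumption
        · rw [if_pos (hbc _ hlB _ h)]; exact hlB
      · have hrB : r.eval T ∈ B := ihr ⟨b, hmem, hbB⟩ har
        rcases hcl (l.eval T) with h | h | h
        · exact absurd (h ▸ my_eval_mem_leaves T l) hal
        · split <;> assumption
        · have hne : l.eval T ≠ r.eval T := by
            intro he
            exact (Finset.disjoint_left.mp hd hrB) (he ▸ h)
          rw [htour.2 _ _ hne, hbc _ hrB _ h]
          simp [hrB]

theorem my_completeTree_leaves {α : Type} :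
    ∀ (d : ℕ) (f : ℕ → α),
      (VTree.completeTree f d).leaves = (List.range (2 ^ d)).map f
  | 0, f => by
      show [f 0] = List.map f (List.range 1)
      rfl
  | d + 1, f => by
      have h : 2 ^ (d + 1) = 2 ^ d + 2 ^ d := by ring
      rw [h, List.range_add]
      simp only [VTree.completeTree, VTree.leaves, my_completeTree_leaves d,
        List.map_append, List.map_map]
      congr 1
      apply List.map_congr_left
      intro i _
      simp [Nat.add_comm]

/-- If the winner of the complete binary tree `Φ_L` with leaves `1, …, n`
(`n = 2^(e+1) ≥ 4`) on a perfect manipulator tournament lies in `C`, then one of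
the two subtrees of the root has all its leaf labels in `C` and the other
contains the leaf labeled `α`. -/
theorem completeTree_winner_in_C_structure {e n : ℕ} (hn : n = 2 ^ (e + 1)) (h4 : 4 ≤ n)
    (T : Fin n → Fin n → Bool) (a : Fin n) (B C : Finset (Fin n))
    (hpm : IsPerfectManipulator T a B C)
    (L R : VTree (Fin n))
    (hL : L = VTree.completeTree
      (fun i : ℕ => (⟨i % n, Nat.mod_lt i (hn ▸ Nat.two_pow_pos (e + 1))⟩ : Fin n)) e)
    (hR : R = VTree.completeTree
      (fun i : ℕ => (⟨(i + 2 ^ e) % n, Nat.mod_lt _ (hn ▸ Nat.two_pow_pos (e + 1))⟩ : Fin n)) e)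
    (hwin : (VTree.node L R).eval T ∈ C) :
    ((∀ l ∈ L.leaves, l ∈ C) ∧ a ∈ R.leaves) ∨
      ((∀ l ∈ R.leaves, l ∈ C) ∧ a ∈ L.leaves) := by
  obtain ⟨htour, hB, hC, haB, haC, hd, huniv, hab, hbc, hca⟩ := hpm
  have hcl : ∀ v : Fin n, v = a ∨ v ∈ B ∨ v ∈ C := by
    intro v
    have : v ∈ insert a (B ∪ C) := huniv ▸ Finset.mem_univ v
    simpa [Finset.mem_insert, Finset.mem_union] using this
  have hn2 : n = 2 ^ e + 2 ^ e := by rw [hn]; ring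
  have hen : 2 ^ e < n := by omega
  -- leaf membership characterizations
  have hLmem : ∀ v : Fin n, v ∈ L.leaves ↔ (v : ℕ) < 2 ^ e := by
    intro v
    rw [hL, my_completeTree_leaves]
    simp only [List.mem_map, List.mem_range]
    constructor
    · rintro ⟨i, hi, rfl⟩
      simpa [Nat.mod_eq_of_lt (lt_trans hi hen)] using hi
    · intro hv
      exact ⟨v, hv, by simp [Nat.mod_eq_of_lt (lt_trans hv hen)]⟩
  have hRmem : ∀ v : Fin n, v ∈ R.leaves ↔ 2 ^ e ≤ (v : ℕ) := by
    intro v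
    rw [hR, my_completeTree_leaves]
    simp only [List.mem_map, List.mem_range]
    constructor
    · rintro ⟨i, hi, rfl⟩
      have hlt : i + 2 ^ e < n := by omega
      simp [Nat.mod_eq_of_lt hlt]
    · intro hv
      have hvn : (v : ℕ) < n := v.isLt
      refine ⟨(v : ℕ) - 2 ^ e, by omega, ?_⟩
      have : (v : ℕ) - 2 ^ e + 2 ^ e = (v : ℕ) := by omega
      simp [this, Nat.mod_eq_of_lt hvn]
  -- evaluations of both sides are not in B
  have hne_aB : ∀ b ∈ B, b ≠ a := fun b hb h => haB (h ▸ hb)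
  have hne_BC : ∀ b ∈ B, ∀ c ∈ C, b ≠ c := fun b hb c hc h =>
    Finset.disjoint_left.mp hd hb (h ▸ hc)
  set x := L.eval T with hx
  set y := R.eval T with hy
  have hwin' : (if T x y then x else y) ∈ C := hwin
  have hxB : x ∉ B := by
    intro hxb
    rcases hcl y with h | h | h
    · -- y = a : a beats nothing in B? a beats b, so T x a = false, winner = a
      rw [h] at hwin'
      have : T x a = false := by
        rw [htour.2 _ _ (hne_aB _ hxb), hab _ hxb]; rfl
      rw [this] at hwin'
      simp at hwin'
      exact haC hwin'
    · have : (if T x y then x else y) ∈ B := by split <;> assumption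
      exact Finset.disjoint_left.mp hd this hwin'
    · rw [if_pos (hbc _ hxb _ h)] at hwin'
      exact Finset.disjoint_left.mp hd hxb hwin'
  have hyB : y ∉ B := by
    intro hyb
    rcases hcl x with h | h | h
    · rw [h, if_pos (hab _ hyb)] at hwin'
      exact haC hwin'
    · have : (if T x y then x else y) ∈ B := by split <;> assumption
      exact Finset.disjoint_left.mp hd this hwin'
    · have hne : x ≠ y := fun he => hne_BC _ hyb _ h he.symm
      rw [htour.2 _ _ hne, hbc _ hyb _ h] at hwin'
      simp at hwin'
      exact Finset.disjoint_left.mp hd hyb hwin'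
  -- the side not containing a has all leaves in C
  by_cases hae : (a : ℕ) < 2 ^ e
  · -- a ∈ L.leaves
    refine Or.inr ⟨?_, (hLmem a).mpr hae⟩
    intro l hl
    have hlR : 2 ^ e ≤ (l : ℕ) := (hRmem l).mp hl
    have haR : a ∉ R.leaves := fun h => absurd ((hRmem a).mp h) (by omega)
    rcases hcl l with h | h | h
    · exact absurd hl (h ▸ haR)
    · exact absurd (my_winner_in_B T a B C htour hd hbc hcl R ⟨l, hl, h⟩ haR) hyB
    · exact h
  · refine Or.inl ⟨?_, (hRmem a).mpr (by omega)⟩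
    intro l hl
    have haL : a ∉ L.leaves := fun h => absurd ((hLmem a).mp h) hae
    rcases hcl l with h | h | h
    · exact absurd hl (h ▸ haL)
    · exact absurd (my_winner_in_B T a B C htour hd hbc hcl L ⟨l, hl, h⟩ haL) hxB
    · exact h
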